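/- Let G be a graph on n vertices, let A, B be disjoint vertex subsets, and suppose μ(H[A,B]) < μ(G[A,B]) − αn for a spanning subgraph H of G. Then there exist disjoint subsets A' ⊆ A, B' ⊆ B with |A'| = |B'| > αn such that G[A',B'] contains a perfect matching between A' and B' but H contains no edge between A' and B'. -/

import Mathlib

open Finset

section Defs

variable {V : Type*}

/-- A matching in `G`: a finset of edges of `G` that are pairwise vertex-disjoint. -/
def IsMatchingSet (G : SimpleGraph V) (M : Finset (Sym2 V)) : Prop :=
  (∀ e ∈ M, e ∈ G.edgeSet) ∧
  ∀ e ∈ M, ∀ f ∈ M, e ≠ f → ∀ v : V, v ∈ e → v ∉ f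

/-- The maximum matching size `μ(G)`. -/
noncomputable def matchNum (G : SimpleGraph V) : ℕ :=
  sSup {k | ∃ M : Finset (Sym2 V), IsMatchingSet G M ∧ M.card = k}

/-- The bipartite subgraph `G[A,B]`: edges of `G` with one endpoint in `A`
and the other in `B`. -/
def biSub (G : SimpleGraph V) (A B : Finset V) : SimpleGraph V where
  Adj u v := G.Adj u v ∧ ((u ∈ A ∧ v ∈ B) ∨ (u ∈ B ∧ v ∈ A))
  symm := ⟨fun u v h =>
    ⟨h.1.symm, h.2.elim (fun hh => Or.inr ⟨hh.2, hh.1⟩) (fun hh => Or.inl ⟨hh.2, hh.1⟩)⟩⟩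
  loopless := ⟨fun v h => G.loopless.irrefl v h.1⟩

end Defs

section AuxLemmas

variable {V : Type*} [Fintype V]

lemma matchSet_nonempty' (G : SimpleGraph V) :
    (0:ℕ) ∈ {k | ∃ M : Finset (Sym2 V), IsMatchingSet G M ∧ M.card = k} :=
  ⟨∅, ⟨fun e he => absurd he (Finset.notMem_empty e),
    fun e he => absurd he (Finset.notMem_empty e)⟩, rfl⟩

lemma matchSet_bddAbove' (G : SimpleGraph V) :
    BddAbove {k | ∃ M : Finset (Sym2 V), IsMatchingSet G M ∧ M.card = k} := by
  classical
  exact ⟨Fintype.card (Sym2 V), fun k hk => by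
    obtain ⟨M, _, rfl⟩ := hk; exact Finset.card_le_univ M⟩

lemma le_matchNum' {G : SimpleGraph V} {M : Finset (Sym2 V)} (hM : IsMatchingSet G M) :
    M.card ≤ matchNum G :=
  le_csSup (matchSet_bddAbove' G) ⟨M, hM, rfl⟩

lemma matchNum_le' {G : SimpleGraph V} {k : ℕ}
    (hk : ∀ M : Finset (Sym2 V), IsMatchingSet G M → M.card ≤ k) :
    matchNum G ≤ k :=
  csSup_le ⟨0, matchSet_nonempty' G⟩ (fun m hm => by
    obtain ⟨M, hM, rfl⟩ := hm; exact hk M hM)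

lemma exists_max_matching' (G : SimpleGraph V) :
    ∃ M : Finset (Sym2 V), IsMatchingSet G M ∧ M.card = matchNum G :=
  Nat.sSup_mem ⟨0, matchSet_nonempty' G⟩ (matchSet_bddAbove' G)

lemma biSub_edge' {G : SimpleGraph V} {A B : Finset V} {e : Sym2 V}
    (he : e ∈ (biSub G A B).edgeSet) :
    ∃ p : V × V, p.1 ∈ A ∧ p.2 ∈ B ∧ G.Adj p.1 p.2 ∧ e = s(p.1, p.2) := by
  induction e using Sym2.ind with
  | _ x y =>
    rw [SimpleGraph.mem_edgeSet] at he
    obtain ⟨hg, h1 | h2⟩ := he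
    · exact ⟨(x, y), h1.1, h1.2, hg, rfl⟩
    · exact ⟨(y, x), h2.2, h2.1, hg.symm, Sym2.eq_swap⟩

lemma matchNum_biSub_le' (G : SimpleGraph V) (A B : Finset V) :
    matchNum (biSub G A B) ≤ A.card := by
  classical
  apply matchNum_le'
  intro M hM
  rcases M.eq_empty_or_nonempty with rfl | ⟨e0, he0⟩
  · simp
  · obtain ⟨p0, _⟩ := biSub_edge' (hM.1 e0 he0)
    haveI : Inhabited V := ⟨p0.1⟩
    have key : ∀ e ∈ M, ∃ x : V, x ∈ e ∧ x ∈ A := by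
      intro e he
      obtain ⟨p, hpA, _, _, rfl⟩ := biSub_edge' (hM.1 e he)
      exact ⟨p.1, Sym2.mem_mk_left _ _, hpA⟩
    choose! φ hφ1 hφ2 using key
    refine Finset.card_le_card_of_injOn φ (fun e he => hφ2 e he) ?_
    intro e he f hf hef
    by_contra hne
    exact hM.2 e he f hf hne (φ e) (hφ1 e he) (hef ▸ hφ1 f hf)

end AuxLemmas

/-- If `μ(H[A,B]) < μ(G[A,B]) - α·n` for a spanning subgraph `H` of `G` and disjoint
`A, B`, then there are `A' ⊆ A`, `B' ⊆ B` with `|A'| = |B'| > α·n` such that `G[A',B']`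
has a perfect matching between `A'` and `B'` while `H` has no edge between them. -/
theorem stmt_4 {V : Type*} [Fintype V] (G H : SimpleGraph V) (hHG : H ≤ G) (α : ℝ)
    (A B : Finset V) (hAB : Disjoint A B)
    (h : (matchNum (biSub H A B) : ℝ) <
      (matchNum (biSub G A B) : ℝ) - α * Fintype.card V) :
    ∃ A' B' : Finset V, A' ⊆ A ∧ B' ⊆ B ∧ A'.card = B'.card ∧
      (A'.card : ℝ) > α * Fintype.card V ∧
      matchNum (biSub G A' B') = A'.card ∧
      ∀ u ∈ A', ∀ v ∈ B', ¬ H.Adj u v := by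
  classical
  by_cases hα : α * (Fintype.card V : ℝ) < 0
  · refine ⟨∅, ∅, Finset.empty_subset _, Finset.empty_subset _, rfl, ?_, ?_, ?_⟩
    · simpa using hα
    · have h0 := matchNum_biSub_le' G (∅ : Finset V) ∅
      simpa using Nat.le_zero.mp (by simpa using h0)
    · intro u hu; simp at hu
  push_neg at hα
  obtain ⟨M, hM, hMcard⟩ := exists_max_matching' (biSub G A B)
  have hMne : M.Nonempty := by
    rw [← Finset.card_pos, hMcard]
    by_contra hc
    push_neg at hc
    have h0 : matchNum (biSub G A B) = 0 := Nat.le_zero.mp hc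
    rw [h0] at h
    have hnn : (0:ℝ) ≤ (matchNum (biSub H A B) : ℝ) := Nat.cast_nonneg _
    push_cast at h
    linarith
  obtain ⟨e0, he0⟩ := hMne
  obtain ⟨p0, _⟩ := biSub_edge' (hM.1 e0 he0)
  haveI : Inhabited V := ⟨p0.1⟩
  have key : ∀ e ∈ M, ∃ p : V × V, p.1 ∈ A ∧ p.2 ∈ B ∧ G.Adj p.1 p.2 ∧ e = s(p.1, p.2) :=
    fun e he => biSub_edge' (hM.1 e he)
  choose! ab ha hb hadj heq using key
  have hmem1 : ∀ e ∈ M, (ab e).1 ∈ e := fun e he => by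
    have := Sym2.mem_mk_left (ab e).1 (ab e).2
    rwa [← heq e he] at this
  have hmem2 : ∀ e ∈ M, (ab e).2 ∈ e := fun e he => by
    have := Sym2.mem_mk_right (ab e).1 (ab e).2
    rwa [← heq e he] at this
  have hainj : ∀ e ∈ M, ∀ f ∈ M, (ab e).1 = (ab f).1 → e = f := by
    intro e he f hf hef
    by_contra hne
    exact hM.2 e he f hf hne (ab e).1 (hmem1 e he) (hef ▸ hmem1 f hf)
  have hbinj : ∀ e ∈ M, ∀ f ∈ M, (ab e).2 = (ab f).2 → e = f := by
    intro e he f hf hef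
    by_contra hne
    exact hM.2 e he f hf hne (ab e).2 (hmem2 e he) (hef ▸ hmem2 f hf)
  have hab_ne : ∀ e ∈ M, ∀ f ∈ M, (ab e).1 ≠ (ab f).2 := by
    intro e he f hf hEq
    exact (Finset.disjoint_left.mp hAB (ha e he)) (hEq ▸ hb f hf)
  set d : ℕ := ⌊α * (Fintype.card V : ℝ)⌋₊ with hd_def
  set N : Finset (Sym2 V) → Finset (Sym2 V) :=
    fun S => M.filter (fun f => ∃ e ∈ S, H.Adj (ab e).1 (ab f).2) with hN_def
  -- main claim: a deficient set exists
  have main : ∃ S ⊆ M, (N S).card + d < S.card := by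
    by_contra hcon
    push_neg at hcon
    set t : {e // e ∈ M} → Finset (Sym2 V ⊕ Fin d) :=
      fun e => ((M.filter (fun f => H.Adj (ab e.1).1 (ab f).2)).image Sum.inl) ∪
        ((Finset.univ : Finset (Fin d)).image Sum.inr) with ht_def
    have hall : ∀ s : Finset {e // e ∈ M}, s.card ≤ (s.biUnion t).card := by
      intro s
      rcases s.eq_empty_or_nonempty with rfl | hs
      · simp
      set S := s.image (fun e => e.1) with hS_def
      have hSM : S ⊆ M := by
        intro x hx
        obtain ⟨e, _, rfl⟩ := Finset.mem_image.mp hx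
        exact e.2
      have hcard : s.card = S.card :=
        (Finset.card_image_of_injOn (fun x _ y _ hxy => Subtype.ext hxy)).symm
      have hsub : ((N S).image Sum.inl ∪
          ((Finset.univ : Finset (Fin d)).image Sum.inr) : Finset (Sym2 V ⊕ Fin d)) ⊆
          s.biUnion t := by
        intro x hx
        rcases Finset.mem_union.mp hx with hx | hx
        · obtain ⟨f, hf, rfl⟩ := Finset.mem_image.mp hx
          rw [hN_def] at hf
          simp only [Finset.mem_filter] at hf
          obtain ⟨hfM, e, heS, hadjef⟩ := hf
          obtain ⟨e', he's, he'e⟩ := Finset.mem_image.mp heS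
          refine Finset.mem_biUnion.mpr ⟨e', he's, ?_⟩
          apply Finset.mem_union_left
          exact Finset.mem_image_of_mem _
            (Finset.mem_filter.mpr ⟨hfM, he'e ▸ hadjef⟩)
        · obtain ⟨e', he's⟩ := hs
          exact Finset.mem_biUnion.mpr ⟨e', he's, Finset.mem_union_right _ hx⟩
      have hdisj : Disjoint ((N S).image Sum.inl)
          ((Finset.univ : Finset (Fin d)).image (Sum.inr : Fin d → Sym2 V ⊕ Fin d)) := by
        rw [Finset.disjoint_left]
        intro x hx1 hx2
        obtain ⟨q, _, rfl⟩ := Finset.mem_image.mp hx1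
        obtain ⟨j, _, hj⟩ := Finset.mem_image.mp hx2
        exact Sum.inl_ne_inr hj.symm
      have hcards : (((N S).image Sum.inl) ∪
          ((Finset.univ : Finset (Fin d)).image Sum.inr)).card = (N S).card + d := by
        rw [Finset.card_union_of_disjoint hdisj,
          Finset.card_image_of_injective _ Sum.inl_injective,
          Finset.card_image_of_injective _ Sum.inr_injective,
          Finset.card_univ, Fintype.card_fin]
      calc s.card = S.card := hcard
        _ ≤ (N S).card + d := hcon S hSM
        _ = _ := hcards.symm
        _ ≤ (s.biUnion t).card := Finset.card_le_card hsub
    obtain ⟨f, hfinj, hft⟩ :=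
      (Finset.all_card_le_biUnion_card_iff_exists_injective t).mp hall
    set T : Finset {e // e ∈ M} :=
      Finset.univ.filter (fun e => (f e).isLeft) with hT_def
    set Tc : Finset {e // e ∈ M} :=
      Finset.univ.filter (fun e => ¬ (f e).isLeft) with hTc_def
    have hTcd : Tc.card ≤ d := by
      have hmem : ∀ e ∈ Tc, f e ∈ ((Finset.univ : Finset (Fin d)).image
          (Sum.inr : Fin d → Sym2 V ⊕ Fin d)) := by
        intro e he
        rw [hTc_def, Finset.mem_filter] at he
        cases hfe : f e with
        | inl q => rw [hfe] at he; simp at he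
        | inr j => exact Finset.mem_image_of_mem _ (Finset.mem_univ j)
      calc Tc.card ≤ ((Finset.univ : Finset (Fin d)).image
            (Sum.inr : Fin d → Sym2 V ⊕ Fin d)).card :=
          Finset.card_le_card_of_injOn f hmem (fun x _ y _ hxy => hfinj hxy)
        _ = d := by
          rw [Finset.card_image_of_injective _ Sum.inr_injective,
            Finset.card_univ, Fintype.card_fin]
    have hTcard : M.card ≤ T.card + d := by
      have hpart : T.card + Tc.card = M.card := by
        rw [hT_def, hTc_def, Finset.card_filter_add_card_filter_not,
          Finset.card_univ, Fintype.card_coe]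
      omega
    -- the partner function
    set g : {e // e ∈ M} → Sym2 V := fun e => Sum.elim id (fun _ => e0) (f e) with hg_def
    have hgl : ∀ e ∈ T, f e = Sum.inl (g e) := by
      intro e he
      rw [hT_def, Finset.mem_filter] at he
      cases hfe : f e with
      | inl q => simp [hg_def, hfe]
      | inr j => rw [hfe] at he; simp at he
    have hg : ∀ e ∈ T, g e ∈ M ∧ H.Adj (ab e.1).1 (ab (g e)).2 := by
      intro e he
      have hfe := hgl e he
      have hte := hft e
      rw [hfe] at hte
      rcases Finset.mem_union.mp hte with h1 | h1
      · obtain ⟨q', hq', hqq⟩ := Finset.mem_image.mp h1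
        obtain rfl : q' = g e := Sum.inl_injective hqq
        rw [Finset.mem_filter] at hq'
        exact ⟨hq'.1, hq'.2⟩
      · exfalso
        obtain ⟨j, _, hj⟩ := Finset.mem_image.mp h1
        exact Sum.inl_ne_inr hj.symm
    have hginj : ∀ e ∈ T, ∀ f' ∈ T, g e = g f' → e = f' := by
      intro e he f' hf' hgef
      apply hfinj
      rw [hgl e he, hgl f' hf', hgef]
    -- build the H-matching
    set F : {e // e ∈ M} → Sym2 V := fun e => s((ab e.1).1, (ab (g e)).2) with hF_def
    have hFinj : Set.InjOn F T := by
      intro e he f' hf' hEq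
      rw [hF_def] at hEq
      simp only [Sym2.eq_iff] at hEq
      rcases hEq with ⟨h1, h2⟩ | ⟨h1, h2⟩
      · exact Subtype.ext (hainj e.1 e.2 f'.1 f'.2 h1)
      · exact absurd h1 (hab_ne e.1 e.2 (g f') (hg f' hf').1)
    set MH : Finset (Sym2 V) := T.image F with hMH_def
    have hMHcard : MH.card = T.card := Finset.card_image_of_injOn hFinj
    have hmatchH : IsMatchingSet (biSub H A B) MH := by
      constructor
      · intro e' he'
        obtain ⟨e, he, rfl⟩ := Finset.mem_image.mp he'
        rw [hF_def, SimpleGraph.mem_edgeSet]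
        exact ⟨(hg e he).2, Or.inl ⟨ha e.1 e.2, hb (g e) (hg e he).1⟩⟩
      · intro e' he' f' hf' hne v hv1 hv2
        obtain ⟨e, he, rfl⟩ := Finset.mem_image.mp he'
        obtain ⟨f'', hf'', rfl⟩ := Finset.mem_image.mp hf'
        have hef : e ≠ f'' := fun hEq => hne (hEq ▸ rfl)
        rw [hF_def] at hv1 hv2
        simp only [Sym2.mem_iff] at hv1 hv2
        rcases hv1 with rfl | rfl <;> rcases hv2 with h2 | h2
        · exact hef (Subtype.ext (hainj e.1 e.2 f''.1 f''.2 h2))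
        · exact hab_ne e.1 e.2 (g f'') (hg f'' hf'').1 h2
        · exact hab_ne f''.1 f''.2 (g e) (hg e he).1 h2.symm
        · exact hef (hginj e he f'' hf''
            (hbinj (g e) (hg e he).1 (g f'') (hg f'' hf'').1 h2))
    have hle : MH.card ≤ matchNum (biSub H A B) := le_matchNum' hmatchH
    have hfin : matchNum (biSub G A B) ≤ matchNum (biSub H A B) + d := by
      calc matchNum (biSub G A B) = M.card := hMcard.symm
        _ ≤ T.card + d := hTcard
        _ = MH.card + d := by rw [hMHcard]
        _ ≤ matchNum (biSub H A B) + d := by omega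
    have hd : (d:ℝ) ≤ α * (Fintype.card V : ℝ) := Nat.floor_le hα
    have hfinR : (matchNum (biSub G A B) : ℝ) ≤ (matchNum (biSub H A B) : ℝ) + d := by
      exact_mod_cast hfin
    linarith
  obtain ⟨S, hSM, hSd⟩ := main
  set S' : Finset (Sym2 V) := S \ N S with hS'_def
  have hS'M : S' ⊆ M := Finset.Subset.trans (Finset.sdiff_subset) hSM
  have hS'S : S' ⊆ S := Finset.sdiff_subset
  have hS'card : d + 1 ≤ S'.card := by
    have h1 : S.card - (N S).card ≤ S'.card := by
      rw [hS'_def]; exact Finset.le_card_sdiff _ _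
    omega
  refine ⟨S'.image (fun e => (ab e).1), S'.image (fun e => (ab e).2), ?_, ?_, ?_, ?_, ?_, ?_⟩
  · intro x hx
    obtain ⟨e, he, rfl⟩ := Finset.mem_image.mp hx
    exact ha e (hS'M he)
  · intro x hx
    obtain ⟨e, he, rfl⟩ := Finset.mem_image.mp hx
    exact hb e (hS'M he)
  · rw [Finset.card_image_of_injOn (fun e he f hf => hainj e (hS'M he) f (hS'M hf)),
      Finset.card_image_of_injOn (fun e he f hf => hbinj e (hS'M he) f (hS'M hf))]
  · rw [Finset.card_image_of_injOn (fun e he f hf => hainj e (hS'M he) f (hS'M hf))]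
    have h1 : α * (Fintype.card V : ℝ) < (d:ℝ) + 1 := Nat.lt_floor_add_one _
    have h2 : ((d:ℕ):ℝ) + 1 ≤ (S'.card : ℝ) := by exact_mod_cast hS'card
    linarith
  · -- matchNum of biSub G A' B' equals card
    have hAcard : (S'.image (fun e => (ab e).1)).card = S'.card :=
      Finset.card_image_of_injOn (fun e he f hf => hainj e (hS'M he) f (hS'M hf))
    apply le_antisymm
    · exact matchNum_biSub_le' G _ _
    · rw [hAcard]
      apply le_matchNum' (M := S')
      constructor
      · intro e he
        rw [heq e (hS'M he), SimpleGraph.mem_edgeSet]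
        refine ⟨hadj e (hS'M he), Or.inl ⟨?_, ?_⟩⟩
        · exact Finset.mem_image_of_mem _ he
        · exact Finset.mem_image_of_mem _ he
      · intro e he f hf hne v hv1 hv2
        exact hM.2 e (hS'M he) f (hS'M hf) hne v hv1 hv2
  · intro u hu v hv hadjuv
    obtain ⟨e, he, rfl⟩ := Finset.mem_image.mp hu
    obtain ⟨f, hf, rfl⟩ := Finset.mem_image.mp hv
    have hfN : f ∈ N S := by
      rw [hN_def]
      exact Finset.mem_filter.mpr ⟨hS'M hf, e, hS'S he, hadjuv⟩
    rw [hS'_def, Finset.mem_sdiff] at hf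
    exact hf.2 hfN
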